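/- The identity Σ_{k≥0} C(k+l,l)·p^l·(1-p)^k·C(k+l+r-1,k+l)·ξ^{k+l}·(1-ξ)^r = C(l+r-1,l)·ξ_p^l·(1-ξ_p)^r holds for all integers l ≥ 0, real r > 0, ξ ∈ (0,1), p ∈ (0,1), with ξ_p = pξ/(1-ξ(1-p)). -/

import Mathlib

open Real MeasureTheory Set

lemma integrableOn_rpow_mul_exp_neg_mul {a c : ℝ} (ha : 0 < a) (hc : 0 < c) :
    IntegrableOn (fun t : ℝ => t ^ (a - 1) * Real.exp (-(c * t))) (Ioi 0) := by
  have h : IntegrableOn (fun t : ℝ => Real.exp (-(c * t)) * (c * t) ^ (a - 1)) (Ioi 0) := by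
    have := (integrableOn_Ioi_comp_mul_left_iff
      (fun x : ℝ => Real.exp (-x) * x ^ (a - 1)) 0 hc).2
    rw [mul_zero] at this
    exact this (Real.GammaIntegral_convergent ha)
  have h3 := h.const_mul ((c : ℝ) ^ (a - 1))⁻¹
  refine IntegrableOn.congr_fun h3 ?_ measurableSet_Ioi
  intro t ht
  have ht' : (0:ℝ) < t := ht
  simp only []
  rw [Real.mul_rpow hc.le ht'.le]
  have : (c:ℝ) ^ (a-1) ≠ 0 := (Real.rpow_pos_of_pos hc _).ne'
  field_simp

lemma lintegral_rpow_mul_exp_neg_mul {a c : ℝ} (ha : 0 < a) (hc : 0 < c) :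
    ∫⁻ t in Ioi (0:ℝ), ENNReal.ofReal (t ^ (a - 1) * Real.exp (-(c * t)))
      = ENNReal.ofReal ((1 / c) ^ a * Real.Gamma a) := by
  rw [← Real.integral_rpow_mul_exp_neg_mul_Ioi ha hc,
    ← ofReal_integral_eq_lintegral_ofReal (integrableOn_rpow_mul_exp_neg_mul ha hc)]
  filter_upwards [ae_restrict_mem measurableSet_Ioi] with t ht
  have ht' : (0:ℝ) < t := ht
  positivity

lemma hasSum_negBinom {s x : ℝ} (hs : 0 < s) (hx0 : 0 ≤ x) (hx1 : x < 1) :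
    HasSum (fun k : ℕ => Real.Gamma (k + s) / (k.factorial * Real.Gamma s) * x ^ k)
      ((1 - x) ^ (-s) : ℝ) := by
  set F : ℕ → ℝ := fun k => Real.Gamma (k + s) / (k.factorial * Real.Gamma s) * x ^ k with hF
  have hΓs : 0 < Real.Gamma s := Real.Gamma_pos_of_pos hs
  have hFnn : ∀ k, 0 ≤ F k := by
    intro k
    have hΓk : 0 < Real.Gamma ((k:ℝ) + s) := Real.Gamma_pos_of_pos (by positivity)
    have : F k = Real.Gamma ((k:ℝ) + s) / (k.factorial * Real.Gamma s) * x ^ k := rfl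
    rw [this]
    positivity
  have h1x : (0:ℝ) < 1 - x := by linarith
  set g : ℕ → ℝ → ℝ := fun k t =>
    x ^ k / (k.factorial * Real.Gamma s) * (Real.exp (-t) * t ^ ((k:ℝ) + s - 1)) with hg
  have key : ∑' k : ℕ, ENNReal.ofReal (F k) = ENNReal.ofReal ((1 - x) ^ (-s)) := by
    have step1 : ∀ k : ℕ, ENNReal.ofReal (F k)
        = ∫⁻ t in Ioi (0:ℝ), ENNReal.ofReal (g k t) := by
      intro k
      have hks : (0:ℝ) < (k:ℝ) + s := by positivity
      have hΓ := Real.Gamma_eq_integral hks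
      have hc : (0:ℝ) ≤ x ^ k / (k.factorial * Real.Gamma s) := by positivity
      have hint := Real.GammaIntegral_convergent hks
      calc ENNReal.ofReal (F k)
          = ENNReal.ofReal (x ^ k / (k.factorial * Real.Gamma s)) *
              ENNReal.ofReal (∫ t in Ioi (0:ℝ), Real.exp (-t) * t ^ ((k:ℝ) + s - 1)) := by
            rw [← ENNReal.ofReal_mul hc, ← hΓ]
            congr 1
            show F k = _
            rw [hF]
            ring
        _ = ENNReal.ofReal (x ^ k / (k.factorial * Real.Gamma s)) *
              ∫⁻ t in Ioi (0:ℝ), ENNReal.ofReal (Real.exp (-t) * t ^ ((k:ℝ) + s - 1)) := by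
            rw [ofReal_integral_eq_lintegral_ofReal hint ?_]
            filter_upwards [ae_restrict_mem measurableSet_Ioi] with t ht
            have ht' : (0:ℝ) < t := ht
            positivity
        _ = ∫⁻ t in Ioi (0:ℝ), ENNReal.ofReal (g k t) := by
            rw [← lintegral_const_mul' _ _ ENNReal.ofReal_ne_top]
            exact lintegral_congr fun t => (ENNReal.ofReal_mul hc).symm
    have meas : ∀ k : ℕ, AEMeasurable (fun t : ℝ => ENNReal.ofReal (g k t))
        (volume.restrict (Ioi (0:ℝ))) := by
      intro k
      apply Measurable.aemeasurable
      apply Measurable.ennreal_ofReal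
      fun_prop
    have step3 : ∀ t ∈ Ioi (0:ℝ),
        ∑' k : ℕ, ENNReal.ofReal (g k t)
          = ENNReal.ofReal ((Real.Gamma s)⁻¹ * (t ^ (s - 1) * Real.exp (-((1 - x) * t)))) := by
      intro t ht
      have ht' : (0:ℝ) < t := ht
      set C : ℝ := (Real.Gamma s)⁻¹ * (t ^ (s - 1) * Real.exp (-t)) with hC
      have hCnn : 0 ≤ C := by
        have := Real.rpow_pos_of_pos ht' (s - 1)
        positivity
      have hterm : ∀ k : ℕ, g k t = ((k.factorial : ℝ)⁻¹ * (x * t) ^ k) * C := by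
        intro k
        have htp : t ^ ((k:ℝ) + s - 1) = t ^ (k : ℕ) * t ^ (s - 1) := by
          rw [← Real.rpow_natCast t k, ← Real.rpow_add ht']
          ring_nf
        rw [hg]
        show x ^ k / (k.factorial * Real.Gamma s) * (Real.exp (-t) * t ^ ((k:ℝ) + s - 1)) = _
        rw [htp, hC, mul_pow]
        have h1 : (k.factorial : ℝ) ≠ 0 := Nat.cast_ne_zero.2 k.factorial_ne_zero
        field_simp
      have hsum : HasSum (fun k : ℕ => ((k.factorial : ℝ)⁻¹ * (x * t) ^ k) * C)
          (Real.exp (x * t) * C) := by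
        have he : Real.exp (x * t) = NormedSpace.exp (x * t) := by
          rw [Real.exp_eq_exp_ℝ]
        rw [he]
        have := (NormedSpace.exp_series_hasSum_exp' (𝕂 := ℝ) (x * t)).mul_right C
        simpa [smul_eq_mul] using this
      have hnn : ∀ k : ℕ, 0 ≤ ((k.factorial : ℝ)⁻¹ * (x * t) ^ k) * C := by
        intro k
        have : 0 ≤ x * t := mul_nonneg hx0 ht'.le
        positivity
      simp_rw [hterm]
      rw [← ENNReal.ofReal_tsum_of_nonneg hnn hsum.summable, hsum.tsum_eq]
      congr 1
      rw [show -((1 - x) * t) = x * t + -t by ring, Real.exp_add, hC]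
      ring
    calc ∑' k : ℕ, ENNReal.ofReal (F k)
        = ∑' k : ℕ, ∫⁻ t in Ioi (0:ℝ), ENNReal.ofReal (g k t) := tsum_congr step1
      _ = ∫⁻ t in Ioi (0:ℝ), ∑' k : ℕ, ENNReal.ofReal (g k t) := (lintegral_tsum meas).symm
      _ = ∫⁻ t in Ioi (0:ℝ), ENNReal.ofReal
            ((Real.Gamma s)⁻¹ * (t ^ (s - 1) * Real.exp (-((1 - x) * t)))) :=
          setLIntegral_congr_fun measurableSet_Ioi step3
      _ = ENNReal.ofReal ((Real.Gamma s)⁻¹) *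
            ∫⁻ t in Ioi (0:ℝ), ENNReal.ofReal (t ^ (s - 1) * Real.exp (-((1 - x) * t))) := by
          rw [← lintegral_const_mul' _ _ ENNReal.ofReal_ne_top]
          exact lintegral_congr fun t => ENNReal.ofReal_mul (by positivity)
      _ = ENNReal.ofReal ((1 - x) ^ (-s)) := by
          rw [lintegral_rpow_mul_exp_neg_mul hs h1x,
            ← ENNReal.ofReal_mul (by positivity)]
          congr 1
          rw [one_div, Real.inv_rpow h1x.le, ← Real.rpow_neg h1x.le]
          field_simp
  have hsummable : Summable F := by
    have hne : (∑' k, ENNReal.ofReal (F k)) ≠ ⊤ := by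
      rw [key]; exact ENNReal.ofReal_ne_top
    refine (ENNReal.summable_toReal hne).congr fun k => ?_
    rw [ENNReal.toReal_ofReal (hFnn k)]
  have htsum : ∑' k, F k = (1 - x) ^ (-s) := by
    have h := key
    rw [← ENNReal.ofReal_tsum_of_nonneg hFnn hsummable] at h
    exact (ENNReal.ofReal_eq_ofReal_iff (tsum_nonneg hFnn)
      (Real.rpow_nonneg h1x.le _)).1 h
  exact htsum ▸ hsummable.hasSum


/-- Generalized negative binomial coefficient C(n+r-1, n) = Γ(n+r)/(Γ(n+1)Γ(r)). -/
noncomputable def nbCoef (r : ℝ) (n : ℕ) : ℝ :=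
  Real.Gamma (n + r) / (Real.Gamma (n + 1) * Real.Gamma r)

/-- Marginalization over the unsampled count:
Σ_{k≥0} C(k+l,l) p^l (1-p)^k C(k+l+r-1,k+l) ξ^{k+l} (1-ξ)^r
  = C(l+r-1,l) ξ_p^l (1-ξ_p)^r, with ξ_p = pξ/(1-ξ(1-p)). -/
theorem stmt12 (r ξ p : ℝ) (hr : 0 < r) (hξ : ξ ∈ Set.Ioo (0:ℝ) 1)
    (hp : p ∈ Set.Ioo (0:ℝ) 1) (l : ℕ) :
    ∑' k : ℕ, ((k + l).choose l : ℝ) * p ^ l * (1 - p) ^ k *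
        (nbCoef r (k + l) * ξ ^ (k + l) * (1 - ξ) ^ r)
      = nbCoef r l * (p * ξ / (1 - ξ * (1 - p))) ^ l *
        (1 - p * ξ / (1 - ξ * (1 - p))) ^ r := by
  obtain ⟨hξ0, hξ1⟩ := hξ
  obtain ⟨hp0, hp1⟩ := hp
  set y : ℝ := (1 - p) * ξ with hy
  have hy0 : 0 ≤ y := by nlinarith
  have hy1 : y < 1 := by nlinarith
  have hA : (0:ℝ) < 1 - y := by linarith
  have hs : (0:ℝ) < (l:ℝ) + r := by positivity
  have hΓr : 0 < Real.Gamma r := Real.Gamma_pos_of_pos hr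
  have hΓlr : 0 < Real.Gamma ((l:ℝ) + r) := Real.Gamma_pos_of_pos hs
  set D : ℝ := nbCoef r l * p ^ l * ξ ^ l * (1 - ξ) ^ r with hD
  have hterm : ∀ k : ℕ, ((k + l).choose l : ℝ) * p ^ l * (1 - p) ^ k *
        (nbCoef r (k + l) * ξ ^ (k + l) * (1 - ξ) ^ r)
      = (Real.Gamma ((k:ℝ) + ((l:ℝ) + r)) / (k.factorial * Real.Gamma ((l:ℝ) + r)) * y ^ k)
          * D := by
    intro k
    have hΓkl : Real.Gamma ((↑(k + l) : ℝ) + r) = Real.Gamma ((k:ℝ) + ((l:ℝ) + r)) := by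
      congr 1; push_cast; ring
    have hfac : Real.Gamma ((↑(k + l) : ℝ) + 1) = ((k + l).factorial : ℝ) :=
      Real.Gamma_nat_eq_factorial _
    have hfl : Real.Gamma ((l:ℝ) + 1) = (l.factorial : ℝ) := Real.Gamma_nat_eq_factorial _
    have hch : ((k + l).choose l : ℝ) * (l.factorial : ℝ) * (k.factorial : ℝ)
        = ((k + l).factorial : ℝ) := by
      have h := Nat.choose_mul_factorial_mul_factorial (Nat.le_add_left l k)
      rw [Nat.add_sub_cancel] at h
      exact_mod_cast h
    have hfk : (k.factorial : ℝ) ≠ 0 := Nat.cast_ne_zero.2 k.factorial_ne_zero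
    have hflne : (l.factorial : ℝ) ≠ 0 := Nat.cast_ne_zero.2 l.factorial_ne_zero
    have hfkl : ((k + l).factorial : ℝ) ≠ 0 := Nat.cast_ne_zero.2 (k + l).factorial_ne_zero
    have hch' : ((k + l).choose l : ℝ)
        = ((k + l).factorial : ℝ) / ((l.factorial : ℝ) * (k.factorial : ℝ)) := by
      field_simp
      linarith [hch]
    rw [hD]
    unfold nbCoef
    rw [hΓkl, hfac, hfl, hch', hy, pow_add, mul_pow]
    field_simp
  rw [tsum_congr hterm, ((hasSum_negBinom hs hy0 hy1).mul_right D).tsum_eq]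
  have hAe : 1 - ξ * (1 - p) = 1 - y := by rw [hy]; ring
  have h1ξ : (0:ℝ) ≤ 1 - ξ := by linarith
  rw [hAe]
  have hfrac : 1 - p * ξ / (1 - y) = (1 - ξ) / (1 - y) := by
    rw [eq_div_iff hA.ne', sub_mul, div_mul_cancel₀ _ hA.ne', hy]
    ring
  rw [hfrac, Real.div_rpow h1ξ hA.le, div_pow,
    show -((l:ℝ) + r) = (-(l:ℝ)) + (-r) by ring, Real.rpow_add hA,
    Real.rpow_neg hA.le, Real.rpow_neg hA.le, Real.rpow_natCast, hD]
  have h1 : ((1 - y) ^ l : ℝ) ≠ 0 := pow_ne_zero _ hA.ne'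
  have h2 : ((1 - y) ^ r : ℝ) ≠ 0 := (Real.rpow_pos_of_pos hA r).ne'
  field_simp
  rw [mul_pow]; ring
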